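/- (Repulsive case: the variational pressure is the mean-field one.) Assume u = −w with w > 0 (so v − u > 0 holds automatically). Then lim_{η→0⁺} inf_{q≥0} inf{ p²(q,ρ,η) : ρ ≥ 0, σ(q,ρ) ≥ 0 } = inf{ p²(0,ρ) : ρ ≥ 0, vρ ≥ μ }, where for u = −w one has p²(q,ρ,η) = p²(q,ρ) + η²/(f(0,ρ) + wq) and σ(q,ρ) = vρ − μ − wq. -/

import Mathlib

open MeasureTheory Real Filter Topology

noncomputable section

namespace PB

abbrev Kspace (ν : ℕ) : Type := EuclideanSpace ℝ (Fin ν)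

/-- kinetic energy `ε(k) = ‖k‖²/(2m)` -/
def eps (ν : ℕ) (m : ℝ) (k : Kspace ν) : ℝ := ‖k‖ ^ 2 / (2 * m)

/-- `f(k,ρ) = ε(k) − μ + vρ` -/
def fF (ν : ℕ) (m μ v : ℝ) (k : Kspace ν) (ρ : ℝ) : ℝ := eps ν m k - μ + v * ρ

/-- `E(k,q,ρ) = (f(k,ρ)² − u²q²|λ(k)|²)^{1/2}` -/
def eE (ν : ℕ) (m μ v u : ℝ) (lam : Kspace ν → ℂ) (k : Kspace ν) (q ρ : ℝ) : ℝ :=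
  Real.sqrt (fF ν m μ v k ρ ^ 2 - u ^ 2 * q ^ 2 * ‖lam k‖ ^ 2)

/-- `σ(q,ρ) = vρ − μ − |u|q` -/
def sigma0 (μ v u q ρ : ℝ) : ℝ := v * ρ - μ - |u| * q

/-- The point `(2π/L)·z` of the dual lattice `Λ* = (2π/L)ℤ^ν`. -/
def latticePt (ν : ℕ) (L : ℝ) (z : Fin ν → ℤ) : Kspace ν :=
  (WithLp.equiv 2 (Fin ν → ℝ)).symm fun i => (2 * π / L) * (z i : ℝ)

/-- integrand of the limiting approximating pressure -/
def p2Int (ν : ℕ) (m μ v u β : ℝ) (lam : Kspace ν → ℂ) (q ρ : ℝ) (k : Kspace ν) : ℝ :=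
  -β⁻¹ * Real.log (1 - Real.exp (-β * eE ν m μ v u lam k q ρ))
    - (eE ν m μ v u lam k q ρ - fF ν m μ v k ρ) / 2

/-- `p²(q,ρ)`, the limiting approximating pressure -/
def p2 (ν : ℕ) (m μ v u β : ℝ) (lam : Kspace ν → ℂ) (q ρ : ℝ) : ℝ :=
  (∫ k : Kspace ν, ((2 * π) ^ ν)⁻¹ * p2Int ν m μ v u β lam q ρ k)
    - u / 2 * q ^ 2 + v / 2 * ρ ^ 2

/-- `p²(q,ρ,η) = p²(q,ρ) + η²/(f(0,ρ) − uq)` -/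
def p2eta (ν : ℕ) (m μ v u β : ℝ) (lam : Kspace ν → ℂ) (q ρ η : ℝ) : ℝ :=
  p2 ν m μ v u β lam q ρ + η ^ 2 / (fF ν m μ v 0 ρ - u * q)

/-- `p²_Λ(q,ρ)`, the finite-volume approximating pressure (cube of side `L`, `V = L^ν`) -/
def p2L (ν : ℕ) (m μ v u β L : ℝ) (lam : Kspace ν → ℂ) (q ρ : ℝ) : ℝ :=
  -(β * L ^ ν)⁻¹ *
      (∑' z : Fin ν → ℤ,
        Real.log (1 - Real.exp (-β * eE ν m μ v u lam (latticePt ν L z) q ρ)))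
    - (2 * L ^ ν)⁻¹ *
      (∑' z : Fin ν → ℤ,
        (eE ν m μ v u lam (latticePt ν L z) q ρ - fF ν m μ v (latticePt ν L z) ρ))
    - u / 2 * q ^ 2 + v / 2 * ρ ^ 2

/-- `p²_Λ(q,ρ,η) = p²_Λ(q,ρ) + η²/(f(0,ρ) − uq)` -/
def p2Leta (ν : ℕ) (m μ v u β L : ℝ) (lam : Kspace ν → ℂ) (q ρ η : ℝ) : ℝ :=
  p2L ν m μ v u β L lam q ρ + η ^ 2 / (fF ν m μ v 0 ρ - u * q)



/-! ### Auxiliary lemmas -/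

section AuxReal

lemma rpow_quarter_add (T : ℝ) (hT : 0 ≤ T) : (1+T) ^ ((1:ℝ)/4) ≤ 1 + T ^ ((1:ℝ)/4) := by
  set Z := T ^ ((1:ℝ)/4) with hZdef
  have hZ : 0 ≤ Z := Real.rpow_nonneg hT _
  have hTZ : T = Z ^ (4:ℕ) := by
    rw [hZdef, ← Real.rpow_natCast (T ^ ((1:ℝ)/4)) 4, ← Real.rpow_mul hT]
    norm_num
  have h1 : 1 + T ≤ (1+Z) ^ (4:ℕ) := by nlinarith [sq_nonneg Z, sq_nonneg (1+Z), pow_nonneg hZ 2]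
  calc (1+T) ^ ((1:ℝ)/4) ≤ ((1+Z) ^ (4:ℕ)) ^ ((1:ℝ)/4) :=
        Real.rpow_le_rpow (by linarith) h1 (by norm_num)
    _ = 1 + Z := by
        rw [← Real.rpow_natCast (1+Z) 4, ← Real.rpow_mul (by linarith)]
        norm_num

lemma log_one_add_le (T : ℝ) (hT : 0 ≤ T) : Real.log (1+T) ≤ 4 * T ^ ((1:ℝ)/4) := by
  have h0 : (0:ℝ) < 1 + T := by linarith
  have h1 : Real.log ((1+T) ^ ((1:ℝ)/4)) ≤ (1+T) ^ ((1:ℝ)/4) - 1 :=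
    Real.log_le_sub_one_of_pos (Real.rpow_pos_of_pos h0 _)
  rw [Real.log_rpow h0] at h1
  have h2 := rpow_quarter_add T hT
  linarith

lemma neg_log_le_log_one_add {y : ℝ} (hy : 0 < y) :
    -Real.log (1 - Real.exp (-y)) ≤ Real.log (1 + 1/y) := by
  have hey : Real.exp (-y) < 1 := Real.exp_lt_one_iff.mpr (by linarith)
  have h0 : 0 < 1 - Real.exp (-y) := by linarith
  have h1 : 1 + y ≤ Real.exp y := by linarith [Real.add_one_le_exp y]
  have h2 : Real.exp (-y) ≤ (1+y)⁻¹ := by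
    rw [Real.exp_neg]
    exact inv_anti₀ (by linarith) h1
  have hlow : y / (1+y) ≤ 1 - Real.exp (-y) := by
    have h3 : y/(1+y) = 1 - (1+y)⁻¹ := by field_simp; ring
    linarith
  have h4 : 0 < y / (1+y) := by positivity
  have h5 := Real.log_le_log h4 hlow
  have h6 : Real.log (y / (1+y)) = - Real.log ((1+y)/y) := by
    rw [← Real.log_inv]; congr 1; field_simp
  have h7 : (1+y)/y = 1 + 1/y := by field_simp; ring
  rw [h6, h7] at h5
  linarith

lemma neg_log_bound {y : ℝ} (hy : 0 < y) :
    -Real.log (1 - Real.exp (-y)) ≤ 4 * Real.exp 1 * y ^ (-(1:ℝ)/4) * Real.exp (-(y/2)) := by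
  have hbase : -Real.log (1 - Real.exp (-y)) ≤ 4 * y ^ (-(1:ℝ)/4) := by
    refine (neg_log_le_log_one_add hy).trans ?_
    have := log_one_add_le (1/y) (by positivity)
    have hq : (1/y) ^ ((1:ℝ)/4) = y ^ (-(1:ℝ)/4) := by
      rw [one_div, ← Real.rpow_neg_one y, ← Real.rpow_mul hy.le]
      norm_num
    rwa [hq] at this
  rcases le_or_gt y 2 with hy2 | hy2
  · have h1 : (1:ℝ) ≤ Real.exp 1 * Real.exp (-(y/2)) := by
      rw [← Real.exp_add]
      refine Real.one_le_exp ?_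
      linarith
    have hrp : (0:ℝ) ≤ y ^ (-(1:ℝ)/4) := Real.rpow_nonneg hy.le _
    calc -Real.log (1 - Real.exp (-y)) ≤ 4 * y ^ (-(1:ℝ)/4) := hbase
      _ = 4 * y ^ (-(1:ℝ)/4) * 1 := by ring
      _ ≤ 4 * y ^ (-(1:ℝ)/4) * (Real.exp 1 * Real.exp (-(y/2))) := by
          refine mul_le_mul_of_nonneg_left h1 (by positivity)
      _ = 4 * Real.exp 1 * y ^ (-(1:ℝ)/4) * Real.exp (-(y/2)) := by ring
  · have hey : Real.exp (-y) < 1 := Real.exp_lt_one_iff.mpr (by linarith)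
    have h0 : 0 < 1 - Real.exp (-y) := by linarith
    have hhalf : Real.exp (-y) ≤ 1/2 := by
      have : Real.exp (-y) ≤ Real.exp (-2) := Real.exp_le_exp.mpr (by linarith)
      have h2 : Real.exp (-2) ≤ 1/2 := by
        rw [Real.exp_neg]
        have : (2:ℝ) ≤ Real.exp 2 := by
          have := Real.add_one_le_exp (2:ℝ); linarith
        rw [show (1:ℝ)/2 = (2:ℝ)⁻¹ by norm_num]
        exact inv_anti₀ (by norm_num) this
      linarith
    have hstep : -Real.log (1 - Real.exp (-y)) ≤ Real.exp (-y) / (1 - Real.exp (-y)) := by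
      have := Real.log_le_sub_one_of_pos (show 0 < (1 - Real.exp (-y))⁻¹ by positivity)
      rw [Real.log_inv] at this
      have heq : (1 - Real.exp (-y))⁻¹ - 1 = Real.exp (-y) / (1 - Real.exp (-y)) := by
        field_simp; ring
      linarith
    have h2 : Real.exp (-y) / (1 - Real.exp (-y)) ≤ 2 * Real.exp (-y) := by
      rw [div_le_iff₀ h0]
      nlinarith [Real.exp_pos (-y)]
    have hq : y ^ ((1:ℝ)/4) ≤ 2 * Real.exp (y/2) := by
      have hz14 : (y/2) ^ ((1:ℝ)/4) ≤ 1 + y/2 := by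
        rcases le_or_gt (y/2) 1 with h | h
        · have := Real.rpow_le_one (by linarith : (0:ℝ) ≤ y/2) h (by norm_num : (0:ℝ) ≤ 1/4)
          linarith
        · have := Real.rpow_le_rpow_of_exponent_le h.le (by norm_num : (1:ℝ)/4 ≤ 1)
          rw [Real.rpow_one] at this
          linarith
      have h2q : (2:ℝ) ^ ((1:ℝ)/4) ≤ 2 := by
        calc (2:ℝ) ^ ((1:ℝ)/4) ≤ (2:ℝ) ^ (1:ℝ) :=
              Real.rpow_le_rpow_of_exponent_le (by norm_num) (by norm_num)
          _ = 2 := Real.rpow_one 2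
      have hsplit : y ^ ((1:ℝ)/4) = (2:ℝ) ^ ((1:ℝ)/4) * (y/2) ^ ((1:ℝ)/4) := by
        rw [← Real.mul_rpow (by norm_num) (by linarith)]
        congr 1; ring
      have hexp : 1 + y/2 ≤ Real.exp (y/2) := by
        have := Real.add_one_le_exp (y/2); linarith
      calc y ^ ((1:ℝ)/4) = (2:ℝ) ^ ((1:ℝ)/4) * (y/2) ^ ((1:ℝ)/4) := hsplit
        _ ≤ 2 * (1 + y/2) := by
            refine mul_le_mul h2q hz14 (Real.rpow_nonneg (by linarith) _) (by norm_num)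
        _ ≤ 2 * Real.exp (y/2) := by nlinarith
    have hq2 : Real.exp (-(y/2)) ≤ 2 * y ^ (-(1:ℝ)/4) := by
      have hy14 : 0 < y ^ ((1:ℝ)/4) := Real.rpow_pos_of_pos hy _
      have hneg : y ^ (-(1:ℝ)/4) = (y ^ ((1:ℝ)/4))⁻¹ := by
        rw [← Real.rpow_neg hy.le]; norm_num
      rw [Real.exp_neg, hneg]
      have h7 : (2 * Real.exp (y/2))⁻¹ ≤ (y ^ ((1:ℝ)/4))⁻¹ := inv_anti₀ hy14 hq
      have h8 : (Real.exp (y/2))⁻¹ = 2 * (2 * Real.exp (y/2))⁻¹ := by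
        rw [mul_inv]; field_simp
      rw [h8]
      exact mul_le_mul_of_nonneg_left h7 (by norm_num)
    have hexpy : Real.exp (-y) = Real.exp (-(y/2)) * Real.exp (-(y/2)) := by
      rw [← Real.exp_add]; congr 1; ring
    calc -Real.log (1 - Real.exp (-y)) ≤ 2 * Real.exp (-y) := hstep.trans h2
      _ = 2 * Real.exp (-(y/2)) * Real.exp (-(y/2)) := by rw [hexpy]; ring
      _ ≤ 2 * (2 * y ^ (-(1:ℝ)/4)) * Real.exp (-(y/2)) := by
          refine mul_le_mul_of_nonneg_right (by nlinarith [Real.exp_pos (-(y/2))])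
            (Real.exp_pos _).le
      _ ≤ 4 * Real.exp 1 * y ^ (-(1:ℝ)/4) * Real.exp (-(y/2)) := by
          have h1e : (1:ℝ) ≤ Real.exp 1 := by linarith [Real.add_one_le_exp (1:ℝ)]
          have hX : (0:ℝ) ≤ y ^ (-(1:ℝ)/4) := Real.rpow_nonneg hy.le _
          nlinarith [mul_nonneg (mul_nonneg (sub_nonneg.mpr h1e) hX) (Real.exp_pos (-(y/2))).le]

end AuxReal

section AuxIntegrable

lemma norm_sq_eq_sum {ν : ℕ} (k : Kspace ν) : ‖k‖^2 = ∑ i, (k i)^2 := by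
  rw [EuclideanSpace.norm_eq]
  rw [Real.sq_sqrt (by positivity)]
  congr 1; ext i; rw [Real.norm_eq_abs, sq_abs]

lemma abs_apply_le_norm {ν : ℕ} (k : Kspace ν) (i : Fin ν) : |k i| ≤ ‖k‖ := by
  have h1 : (k i)^2 ≤ ∑ j, (k j)^2 :=
    Finset.single_le_sum (fun j _ => sq_nonneg (k j)) (Finset.mem_univ i)
  rw [← norm_sq_eq_sum] at h1
  nlinarith [abs_nonneg (k i), norm_nonneg k, sq_abs (k i)]

lemma integrable_abs_rpow_exp {b : ℝ} (hb : 0 < b) :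
    Integrable (fun t : ℝ => |t| ^ (-(1:ℝ)/2) * Real.exp (-b * t^2)) := by
  have hs : (-1:ℝ) < -(1:ℝ)/2 := by norm_num
  have h1 : Integrable (fun t : ℝ => t ^ (-(1:ℝ)/2) * Real.exp (-b * t^2)) :=
    integrable_rpow_mul_exp_neg_mul_sq hb hs
  have hneg : Integrable (fun t : ℝ => (-t) ^ (-(1:ℝ)/2) * Real.exp (-b * t^2)) := by
    have := ((Measure.measurePreserving_neg (volume : Measure ℝ)).integrable_comp_emb
      (Homeomorph.neg ℝ).measurableEmbedding).mpr h1
    refine this.congr (Filter.Eventually.of_forall fun t => ?_)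
    simp [Function.comp, neg_sq]
  refine (h1.add hneg).congr (Filter.Eventually.of_forall fun t => ?_)
  have hzero : ∀ x : ℝ, x < 0 → x ^ (-(1:ℝ)/2) = 0 := by
    intro x hx
    rw [Real.rpow_def_of_neg hx]
    have : Real.cos (-(1:ℝ)/2 * π) = 0 := by
      rw [show (-(1:ℝ)/2 * π) = -(π/2) by ring, Real.cos_neg, Real.cos_pi_div_two]
    rw [this, mul_zero]
  simp only [Pi.add_apply]
  rcases lt_trichotomy t 0 with ht | ht | ht
  · rw [abs_of_neg ht, hzero t ht]; ring
  · subst ht; norm_num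
  · rw [abs_of_pos ht, hzero (-t) (by linarith)]; ring

lemma integrable_dom {ν : ℕ} (i₀ : Fin ν) {b : ℝ} (hb : 0 < b) :
    Integrable (fun k : Kspace ν => |k i₀| ^ (-(1:ℝ)/2) * Real.exp (-b * ‖k‖^2)) := by
  classical
  set G : Fin ν → ℝ → ℝ := fun i t =>
    if i = i₀ then |t| ^ (-(1:ℝ)/2) * Real.exp (-b * t^2) else Real.exp (-b * t^2) with hG
  have hGint : ∀ i, Integrable (G i) := by
    intro i
    by_cases h : i = i₀
    · simp only [hG, h, if_true]
      exact integrable_abs_rpow_exp hb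
    · simp only [hG, if_neg h]
      exact integrable_exp_neg_mul_sq hb
  have hF : Integrable (fun y : Fin ν → ℝ => ∏ i, G i (y i)) := Integrable.fintype_prod hGint
  have he := EuclideanSpace.volume_preserving_symm_measurableEquiv_toLp (Fin ν)
  have h2 : Integrable ((fun y : Fin ν → ℝ => ∏ i, G i (y i)) ∘
      ((MeasurableEquiv.toLp 2 (Fin ν → ℝ)).symm)) :=
    (he.integrable_comp_emb (MeasurableEquiv.measurableEmbedding _)).mpr hF
  refine h2.congr (Filter.Eventually.of_forall fun k => ?_)
  have happ : ∀ i, ((MeasurableEquiv.toLp 2 (Fin ν → ℝ)).symm) k i = k i := fun i => rfl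
  simp only [Function.comp, happ]
  have hprod : ∏ i, G i (k i)
      = (|k i₀| ^ (-(1:ℝ)/2) * Real.exp (-b * (k i₀)^2)) *
        ∏ i ∈ Finset.univ.erase i₀, Real.exp (-b * (k i)^2) := by
    rw [← Finset.mul_prod_erase Finset.univ (fun i => G i (k i)) (Finset.mem_univ i₀)]
    congr 1
    · simp [hG]
    · refine Finset.prod_congr rfl fun i hi => ?_
      simp [hG, (Finset.mem_erase.mp hi).1]
  have hexp : Real.exp (-b * ‖k‖^2) = ∏ i, Real.exp (-b * (k i)^2) := by
    rw [norm_sq_eq_sum, Finset.mul_sum, Real.exp_sum]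
  rw [hprod, hexp,
    ← Finset.mul_prod_erase Finset.univ (fun i => Real.exp (-b * (k i)^2)) (Finset.mem_univ i₀)]
  ring

lemma null_hyperplane {ν : ℕ} (i₀ : Fin ν) :
    (volume : Measure (Kspace ν)) {k | k i₀ = 0} = 0 := by
  have he := EuclideanSpace.volume_preserving_symm_measurableEquiv_toLp (Fin ν)
  have hA : MeasurableSet {y : Fin ν → ℝ | y i₀ = 0} :=
    measurable_pi_apply i₀ (measurableSet_singleton 0)
  have hset : {k : Kspace ν | k i₀ = 0}
      = ((MeasurableEquiv.toLp 2 (Fin ν → ℝ)).symm) ⁻¹' {y : Fin ν → ℝ | y i₀ = 0} := rfl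
  rw [hset, he.measure_preimage hA.nullMeasurableSet]
  have hv : (volume : Measure (Fin ν → ℝ)) = Measure.pi fun _ => volume := rfl
  rw [hv]
  exact Measure.pi_hyperplane _ i₀ 0

lemma ae_ne_zero {ν : ℕ} (i₀ : Fin ν) : ∀ᵐ k : Kspace ν, k i₀ ≠ 0 := by
  rw [ae_iff]
  convert null_hyperplane i₀ using 2
  simp [not_not]

lemma integrable_g1 {ν : ℕ} (hν : 1 ≤ ν) {m β : ℝ} (hm : 0 < m) (hβ : 0 < β) :
    Integrable (fun k : Kspace ν => -β⁻¹ * Real.log (1 - Real.exp (-β * eps ν m k))) := by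
  have i₀ : Fin ν := ⟨0, hν⟩
  set c₀ := β / (2*m) with hc₀
  have hc₀pos : 0 < c₀ := by positivity
  set b := c₀ / 2 with hbdef
  have hb : 0 < b := by positivity
  set A := β⁻¹ * (4 * Real.exp 1 * c₀ ^ (-(1:ℝ)/4)) with hA
  refine ((integrable_dom i₀ hb).const_mul A).mono' ?_ ?_
  · apply Measurable.aestronglyMeasurable
    have hcont : Continuous (fun k : Kspace ν => 1 - Real.exp (-β * eps ν m k)) := by
      unfold eps; fun_prop
    exact (Real.measurable_log.comp hcont.measurable).const_mul _
  · filter_upwards [ae_ne_zero i₀] with k hk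
    have h0 : 0 < |k i₀| := abs_pos.mpr hk
    have hr : 0 < ‖k‖ := lt_of_lt_of_le h0 (abs_apply_le_norm k i₀)
    set y := β * eps ν m k with hy
    have hyy : y = c₀ * ‖k‖^2 := by
      rw [hy, hc₀]; unfold eps; field_simp
    have hypos : 0 < y := by rw [hyy]; positivity
    have harg : -β * eps ν m k = -y := by rw [hy]; ring
    rw [harg]
    have hexple : Real.exp (-y) ≤ 1 := Real.exp_le_one_iff.mpr (by linarith)
    have hlognp : Real.log (1 - Real.exp (-y)) ≤ 0 :=
      Real.log_nonpos (by linarith) (by linarith [Real.exp_pos (-y)])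
    have hnorm : ‖-β⁻¹ * Real.log (1 - Real.exp (-y))‖
        = β⁻¹ * (-Real.log (1 - Real.exp (-y))) := by
      rw [Real.norm_eq_abs, abs_mul, abs_neg, abs_inv, abs_of_pos hβ, abs_of_nonpos hlognp]
    rw [hnorm]
    have hkey := neg_log_bound hypos
    have hpow : y ^ (-(1:ℝ)/4) = c₀ ^ (-(1:ℝ)/4) * (‖k‖ ^ 2) ^ (-(1:ℝ)/4) := by
      rw [hyy, Real.mul_rpow hc₀pos.le (by positivity)]
    have hpow2 : (‖k‖ ^ 2) ^ (-(1:ℝ)/4) = ‖k‖ ^ (-(1:ℝ)/2) := by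
      rw [← Real.rpow_natCast ‖k‖ 2, ← Real.rpow_mul (norm_nonneg k)]
      norm_num
    have hmono : ‖k‖ ^ (-(1:ℝ)/2) ≤ |k i₀| ^ (-(1:ℝ)/2) :=
      Real.rpow_le_rpow_of_nonpos h0 (abs_apply_le_norm k i₀) (by norm_num)
    have hexp : Real.exp (-(y/2)) = Real.exp (-b * ‖k‖^2) := by
      congr 1; rw [hyy, hbdef]; ring
    calc β⁻¹ * (-Real.log (1 - Real.exp (-y)))
        ≤ β⁻¹ * (4 * Real.exp 1 * y ^ (-(1:ℝ)/4) * Real.exp (-(y/2))) := by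
          exact mul_le_mul_of_nonneg_left hkey (by positivity)
      _ = A * (‖k‖ ^ (-(1:ℝ)/2) * Real.exp (-b * ‖k‖^2)) := by
          rw [hpow, hpow2, hexp, hA]; ring
      _ ≤ A * (|k i₀| ^ (-(1:ℝ)/2) * Real.exp (-b * ‖k‖^2)) := by
          refine mul_le_mul_of_nonneg_left ?_ (by positivity)
          exact mul_le_mul_of_nonneg_right hmono (Real.exp_pos _).le

lemma integrable_lam {ν : ℕ} {c δ : ℝ} (hδ : 0 < δ) (lam : Kspace ν → ℂ)
    (hmeas : Measurable lam) (hlam0 : lam 0 = 1)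
    (hdec : ∀ k : Kspace ν, ‖lam k‖ ≤ c / (1 + ‖k‖ ^ (max (ν : ℝ) ((ν : ℝ) / 2 + 1) + δ))) :
    Integrable (fun k : Kspace ν => ‖lam k‖) := by
  set s := max (ν : ℝ) ((ν : ℝ) / 2 + 1) + δ with hs
  have hsν : (ν:ℝ) < s := lt_of_le_of_lt (le_max_left _ _) (lt_add_of_pos_right _ hδ)
  have hs0 : 0 < s := lt_of_le_of_lt (Nat.cast_nonneg ν) hsν
  have hc : 1 ≤ c := by
    have h := hdec 0
    rwa [hlam0, norm_one, norm_zero, Real.zero_rpow hs0.ne', add_zero, div_one] at h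
  have hfinrank : (Module.finrank ℝ (Kspace ν) : ℝ) < s := by
    rw [finrank_euclideanSpace_fin]; exact hsν
  refine ((integrable_one_add_norm (μ := (volume : Measure (Kspace ν))) hfinrank).const_mul
    (c * 2 ^ s)).mono' (hmeas.norm.aestronglyMeasurable)
    (Filter.Eventually.of_forall fun k => ?_)
  rw [norm_norm]
  set t := ‖k‖ with ht
  have ht0 : 0 ≤ t := norm_nonneg k
  have key : (1+t) ^ s ≤ 2 ^ s * (1 + t ^ s) := by
    rcases le_total t 1 with h | h
    · have h1 : (1+t) ^ s ≤ 2 ^ s :=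
        Real.rpow_le_rpow (by positivity) (by linarith) hs0.le
      have h2 : (1:ℝ) ≤ 1 + t ^ s := le_add_of_nonneg_right (Real.rpow_nonneg ht0 s)
      nlinarith [Real.rpow_nonneg (show (0:ℝ) ≤ 2 by norm_num) s]
    · have h1 : (1+t) ^ s ≤ (2*t) ^ s :=
        Real.rpow_le_rpow (by positivity) (by linarith) hs0.le
      have h2 : (2*t) ^ s = 2 ^ s * t ^ s := Real.mul_rpow (by norm_num) ht0
      have h3 : (0:ℝ) < 2 ^ s := Real.rpow_pos_of_pos (by norm_num) s
      nlinarith [Real.rpow_nonneg ht0 s]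
  have hts : (0:ℝ) < 1 + t ^ s := by positivity
  have h1t : (0:ℝ) < (1+t) ^ s := Real.rpow_pos_of_pos (by linarith) s
  have h2 : c / (1 + t ^ s) ≤ c * 2 ^ s * (1+t) ^ (-s) := by
    rw [Real.rpow_neg (by linarith), ← div_eq_mul_inv]
    rw [div_le_div_iff₀ hts h1t]
    calc c * (1+t) ^ s ≤ c * (2 ^ s * (1 + t ^ s)) :=
          mul_le_mul_of_nonneg_left key (by linarith)
      _ = c * 2 ^ s * (1 + t ^ s) := by ring
  exact (hdec k).trans h2

end AuxIntegrable

section AuxIneq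

variable {ν : ℕ} {m μ v w q ρ β : ℝ} {lam : Kspace ν → ℂ} {k : Kspace ν}

lemma eps_nonneg (hm : 0 < m) : 0 ≤ eps ν m k := by
  unfold eps; positivity

lemma fF_ge (hm : 0 < m) (hw : 0 ≤ w) (hq : 0 ≤ q) (hfeas : w * q ≤ v * ρ - μ) :
    eps ν m k + w * q ≤ fF ν m μ v k ρ := by
  unfold fF; linarith

lemma fF_nonneg (hm : 0 < m) (hw : 0 ≤ w) (hq : 0 ≤ q) (hfeas : w * q ≤ v * ρ - μ) :
    0 ≤ fF ν m μ v k ρ := by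
  have := fF_ge (μ := μ) (v := v) (ρ := ρ) (k := k) hm hw hq hfeas
  have := eps_nonneg (ν := ν) (m := m) (k := k) hm
  nlinarith [mul_nonneg hw hq]

lemma eE_le_fF (hm : 0 < m) (hw : 0 ≤ w) (hq : 0 ≤ q) (hfeas : w * q ≤ v * ρ - μ) :
    eE ν m μ v (-w) lam k q ρ ≤ fF ν m μ v k ρ := by
  have hf : 0 ≤ fF ν m μ v k ρ := fF_nonneg hm hw hq hfeas
  unfold eE
  calc Real.sqrt (fF ν m μ v k ρ ^ 2 - (-w) ^ 2 * q ^ 2 * ‖lam k‖ ^ 2)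
      ≤ Real.sqrt (fF ν m μ v k ρ ^ 2) :=
        Real.sqrt_le_sqrt (by nlinarith [sq_nonneg (w * q * ‖lam k‖)])
    _ = fF ν m μ v k ρ := Real.sqrt_sq hf

lemma arg_ge (hm : 0 < m) (hw : 0 ≤ w) (hq : 0 ≤ q) (hfeas : w * q ≤ v * ρ - μ)
    (hl : ‖lam k‖ ≤ 1) :
    (eps ν m k) ^ 2 ≤ fF ν m μ v k ρ ^ 2 - (-w) ^ 2 * q ^ 2 * ‖lam k‖ ^ 2 := by
  have h1 := fF_ge (μ := μ) (v := v) (ρ := ρ) (k := k) hm hw hq hfeas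
  have h2 := eps_nonneg (ν := ν) (m := m) (k := k) hm
  have h3 : 0 ≤ ‖lam k‖ := norm_nonneg _
  have hL2 : ‖lam k‖ ^ 2 ≤ 1 := by nlinarith
  have hcomp : (eps ν m k + w * q) ^ 2 ≤ fF ν m μ v k ρ ^ 2 :=
    pow_le_pow_left₀ (by positivity) h1 2
  nlinarith [mul_nonneg (mul_nonneg hw hq) h2, sq_nonneg (w * q),
    mul_le_mul_of_nonneg_left hL2 (sq_nonneg (w * q))]

lemma eps_le_eE (hm : 0 < m) (hw : 0 ≤ w) (hq : 0 ≤ q) (hfeas : w * q ≤ v * ρ - μ)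
    (hl : ‖lam k‖ ≤ 1) :
    eps ν m k ≤ eE ν m μ v (-w) lam k q ρ := by
  have := arg_ge (lam := lam) hm hw hq hfeas hl
  unfold eE
  calc eps ν m k = Real.sqrt ((eps ν m k) ^ 2) := (Real.sqrt_sq (eps_nonneg hm)).symm
    _ ≤ _ := Real.sqrt_le_sqrt this

lemma eE_sq (hm : 0 < m) (hw : 0 ≤ w) (hq : 0 ≤ q) (hfeas : w * q ≤ v * ρ - μ)
    (hl : ‖lam k‖ ≤ 1) :
    (eE ν m μ v (-w) lam k q ρ) ^ 2 = fF ν m μ v k ρ ^ 2 - (-w) ^ 2 * q ^ 2 * ‖lam k‖ ^ 2 := by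
  have h1 := arg_ge (lam := lam) hm hw hq hfeas hl
  have h2 := eps_nonneg (ν := ν) (m := m) (k := k) hm
  exact Real.sq_sqrt (by nlinarith)

lemma fF_sub_eE_le (hm : 0 < m) (hw : 0 ≤ w) (hq : 0 ≤ q) (hfeas : w * q ≤ v * ρ - μ)
    (hl : ‖lam k‖ ≤ 1) :
    fF ν m μ v k ρ - eE ν m μ v (-w) lam k q ρ ≤ w * q * ‖lam k‖ := by
  set E := eE ν m μ v (-w) lam k q ρ with hE
  set f := fF ν m μ v k ρ with hf
  have hE0 : 0 ≤ E := Real.sqrt_nonneg _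
  have hEf : E ≤ f := eE_le_fF hm hw hq hfeas
  have hsq : E ^ 2 = f ^ 2 - (-w) ^ 2 * q ^ 2 * ‖lam k‖ ^ 2 := eE_sq hm hw hq hfeas hl
  have key : (f - E) ^ 2 ≤ (w * q * ‖lam k‖) ^ 2 := by nlinarith
  have h1 : 0 ≤ f - E := by linarith
  have h2 : 0 ≤ w * q * ‖lam k‖ := by positivity
  exact (pow_le_pow_iff_left₀ h1 h2 (by norm_num)).mp key

lemma eE_zero_q (hf : 0 ≤ fF ν m μ v k ρ) (u : ℝ) :
    eE ν m μ v u lam k 0 ρ = fF ν m μ v k ρ := by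
  unfold eE
  rw [show fF ν m μ v k ρ ^ 2 - u ^ 2 * 0 ^ 2 * ‖lam k‖ ^ 2 = fF ν m μ v k ρ ^ 2 by ring,
    Real.sqrt_sq hf]

lemma p2Int_nonneg (hm : 0 < m) (hβ : 0 < β) (hw : 0 ≤ w) (hq : 0 ≤ q)
    (hfeas : w * q ≤ v * ρ - μ) :
    0 ≤ p2Int ν m μ v (-w) β lam q ρ k := by
  set E := eE ν m μ v (-w) lam k q ρ with hE
  have hE0 : 0 ≤ E := Real.sqrt_nonneg _
  have hEf : E ≤ fF ν m μ v k ρ := eE_le_fF hm hw hq hfeas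
  have h1 : Real.log (1 - Real.exp (-β * E)) ≤ 0 := by
    apply Real.log_nonpos
    · have : Real.exp (-β * E) ≤ 1 := Real.exp_le_one_iff.mpr (by nlinarith)
      linarith
    · linarith [Real.exp_pos (-β * E)]
  unfold p2Int
  rw [← hE]
  have h2 : 0 ≤ -β⁻¹ * Real.log (1 - Real.exp (-β * E)) := by
    rw [neg_mul, neg_nonneg]
    exact mul_nonpos_of_nonneg_of_nonpos (by positivity) h1
  have h3 : (E - fF ν m μ v k ρ) / 2 ≤ 0 := by linarith
  linarith

lemma p2Int_mono (hm : 0 < m) (hβ : 0 < β) (hw : 0 ≤ w) (hq : 0 ≤ q)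
    (hfeas : w * q ≤ v * ρ - μ) (hl : ‖lam k‖ ≤ 1) (heps : 0 < eps ν m k) :
    p2Int ν m μ v (-w) β lam 0 ρ k ≤ p2Int ν m μ v (-w) β lam q ρ k := by
  set E := eE ν m μ v (-w) lam k q ρ with hE
  set f := fF ν m μ v k ρ with hf
  have hf0 : 0 ≤ f := fF_nonneg hm hw hq hfeas
  have hEf : E ≤ f := eE_le_fF hm hw hq hfeas
  have hepsE : eps ν m k ≤ E := eps_le_eE hm hw hq hfeas hl
  have hEpos : 0 < E := lt_of_lt_of_le heps hepsE
  have hexp1 : Real.exp (-β * E) < 1 := Real.exp_lt_one_iff.mpr (by nlinarith)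
  have hmono : Real.exp (-β * f) ≤ Real.exp (-β * E) :=
    Real.exp_le_exp.mpr (by nlinarith)
  have hlog : Real.log (1 - Real.exp (-β * E)) ≤ Real.log (1 - Real.exp (-β * f)) :=
    Real.log_le_log (by linarith) (by linarith)
  unfold p2Int
  rw [← hE, ← hf, eE_zero_q hf0]
  have h1 : -β⁻¹ * Real.log (1 - Real.exp (-β * f))
      ≤ -β⁻¹ * Real.log (1 - Real.exp (-β * E)) := by
    have hβi : 0 ≤ β⁻¹ := by positivity
    nlinarith
  have h2 : (E - f) / 2 ≤ (f - f) / 2 := by linarith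
  linarith

lemma p2Int_le_dom (hm : 0 < m) (hβ : 0 < β) (hw : 0 ≤ w) (hq : 0 ≤ q)
    (hfeas : w * q ≤ v * ρ - μ) (hl : ‖lam k‖ ≤ 1) (heps : 0 < eps ν m k) :
    p2Int ν m μ v (-w) β lam q ρ k ≤
      -β⁻¹ * Real.log (1 - Real.exp (-β * eps ν m k)) + w * q / 2 * ‖lam k‖ := by
  set E := eE ν m μ v (-w) lam k q ρ with hE
  set f := fF ν m μ v k ρ with hf
  have hEf : E ≤ f := eE_le_fF hm hw hq hfeas
  have hepsE : eps ν m k ≤ E := eps_le_eE hm hw hq hfeas hl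
  have hexp1 : Real.exp (-β * eps ν m k) < 1 := Real.exp_lt_one_iff.mpr (by nlinarith)
  have hmono : Real.exp (-β * E) ≤ Real.exp (-β * eps ν m k) :=
    Real.exp_le_exp.mpr (by nlinarith)
  have hlog : Real.log (1 - Real.exp (-β * eps ν m k)) ≤ Real.log (1 - Real.exp (-β * E)) :=
    Real.log_le_log (by linarith) (by linarith)
  have h1 : -β⁻¹ * Real.log (1 - Real.exp (-β * E)) ≤
      -β⁻¹ * Real.log (1 - Real.exp (-β * eps ν m k)) := by
    have hβi : 0 ≤ β⁻¹ := by positivity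
    nlinarith
  have h2 : f - E ≤ w * q * ‖lam k‖ := fF_sub_eE_le hm hw hq hfeas hl
  unfold p2Int
  rw [← hE, ← hf]
  nlinarith

lemma integrable_p2Int (hν : 1 ≤ ν) (hm : 0 < m) (hβ : 0 < β) (hw : 0 ≤ w) (hq : 0 ≤ q)
    (hfeas : w * q ≤ v * ρ - μ) (hmeas : Measurable lam) (hlam1 : ∀ k, ‖lam k‖ ≤ 1)
    (hlamInt : Integrable fun k : Kspace ν => ‖lam k‖) :
    Integrable (p2Int ν m μ v (-w) β lam q ρ) := by
  refine ((integrable_g1 hν hm hβ).add (hlamInt.const_mul (w*q/2))).mono' ?_ ?_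
  · apply Measurable.aestronglyMeasurable
    have mf : Measurable (fun k : Kspace ν => fF ν m μ v k ρ) := by
      unfold fF eps; fun_prop
    have hEm : Measurable (fun k : Kspace ν => eE ν m μ v (-w) lam k q ρ) := by
      unfold eE fF eps
      exact Real.continuous_sqrt.measurable.comp (by fun_prop)
    unfold p2Int
    exact ((Real.measurable_log.comp
      (measurable_const.sub (Real.measurable_exp.comp (hEm.const_mul (-β))))).const_mul
        (-β⁻¹)).sub ((hEm.sub mf).div_const 2)
  · filter_upwards [ae_ne_zero (⟨0, hν⟩ : Fin ν)] with k hk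
    have h0 : 0 < ‖k‖ := lt_of_lt_of_le (abs_pos.mpr hk) (abs_apply_le_norm k _)
    have heps : 0 < eps ν m k := by unfold eps; positivity
    have hnn := p2Int_nonneg (lam := lam) (k := k) hm hβ hw hq hfeas
    rw [Real.norm_eq_abs, abs_of_nonneg hnn]
    have hd := p2Int_le_dom hm hβ hw hq hfeas (hlam1 k) heps
    simpa using hd

lemma p2_nonneg (hm : 0 < m) (hβ : 0 < β) (hw : 0 ≤ w) (hq : 0 ≤ q) (hv : 0 ≤ v)
    (hfeas : w * q ≤ v * ρ - μ) :
    0 ≤ p2 ν m μ v (-w) β lam q ρ := by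
  unfold p2
  have h1 : 0 ≤ ∫ k : Kspace ν, ((2 * π) ^ ν)⁻¹ * p2Int ν m μ v (-w) β lam q ρ k :=
    integral_nonneg fun k => mul_nonneg (by positivity)
      (p2Int_nonneg hm hβ hw hq hfeas)
  nlinarith [mul_nonneg hw (sq_nonneg q), mul_nonneg hv (sq_nonneg ρ)]

lemma p2_mono (hν : 1 ≤ ν) (hm : 0 < m) (hβ : 0 < β) (hw : 0 ≤ w) (hq : 0 ≤ q)
    (hfeas : w * q ≤ v * ρ - μ) (hmeas : Measurable lam) (hlam1 : ∀ k, ‖lam k‖ ≤ 1)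
    (hlamInt : Integrable fun k : Kspace ν => ‖lam k‖) :
    p2 ν m μ v (-w) β lam 0 ρ ≤ p2 ν m μ v (-w) β lam q ρ := by
  have hfeas0 : w * 0 ≤ v * ρ - μ := by nlinarith [mul_nonneg hw hq]
  unfold p2
  have hmonoI : (∫ k : Kspace ν, ((2 * π) ^ ν)⁻¹ * p2Int ν m μ v (-w) β lam 0 ρ k)
      ≤ ∫ k : Kspace ν, ((2 * π) ^ ν)⁻¹ * p2Int ν m μ v (-w) β lam q ρ k := by
    refine integral_mono_of_nonneg ?_
      ((integrable_p2Int hν hm hβ hw hq hfeas hmeas hlam1 hlamInt).const_mul _) ?_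
    · exact Filter.Eventually.of_forall fun k => mul_nonneg (by positivity)
        (p2Int_nonneg hm hβ hw le_rfl hfeas0)
    · filter_upwards [ae_ne_zero (⟨0, hν⟩ : Fin ν)] with k hk
      have h0 : 0 < ‖k‖ := lt_of_lt_of_le (abs_pos.mpr hk) (abs_apply_le_norm k _)
      have heps : 0 < eps ν m k := by unfold eps; positivity
      exact mul_le_mul_of_nonneg_left
        (p2Int_mono hm hβ hw hq hfeas (hlam1 k) heps) (by positivity)
  nlinarith [mul_nonneg hw (sq_nonneg q)]

lemma fF_zero_eq : fF ν m μ v 0 ρ = v * ρ - μ := by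
  unfold fF eps
  rw [norm_zero, show (0:ℝ)^2/(2*m) = 0 by simp]
  ring

end AuxIneq


theorem statement17
    (ν : ℕ) (hν : 1 ≤ ν) (m β μ v : ℝ) (hm : 0 < m) (hβ : 0 < β) (hv : 0 < v)
    (lam : Kspace ν → ℂ) (hmeas : Measurable lam) (hlam0 : lam 0 = 1)
    (hlam1 : ∀ k, ‖lam k‖ ≤ 1)
    (c δ : ℝ) (hδ : 0 < δ)
    (hdec : ∀ k : Kspace ν, ‖lam k‖ ≤ c / (1 + ‖k‖ ^ (max (ν : ℝ) ((ν : ℝ) / 2 + 1) + δ)))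
    (w : ℝ) (hw : 0 < w) :
    Tendsto (fun η : ℝ =>
        sInf {x : ℝ | ∃ q ρ : ℝ, 0 ≤ q ∧ 0 ≤ ρ ∧ 0 ≤ sigma0 μ v (-w) q ρ ∧
          x = p2eta ν m μ v (-w) β lam q ρ η})
      (𝓝[>] (0:ℝ))
      (𝓝 (sInf {x : ℝ | ∃ ρ : ℝ, 0 ≤ ρ ∧ μ ≤ v * ρ ∧
          x = p2 ν m μ v (-w) β lam 0 ρ})) := by
  have hw0 : 0 ≤ w := hw.le
  have hlamInt : Integrable (fun k : Kspace ν => ‖lam k‖) :=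
    integrable_lam hδ lam hmeas hlam0 hdec
  set T : Set ℝ := {x : ℝ | ∃ ρ : ℝ, 0 ≤ ρ ∧ μ ≤ v * ρ ∧
    x = p2 ν m μ v (-w) β lam 0 ρ} with hTdef
  set S : ℝ → Set ℝ := fun η => {x : ℝ | ∃ q ρ : ℝ, 0 ≤ q ∧ 0 ≤ ρ ∧ 0 ≤ sigma0 μ v (-w) q ρ ∧
    x = p2eta ν m μ v (-w) β lam q ρ η} with hSdef
  have hsig : ∀ q ρ : ℝ, sigma0 μ v (-w) q ρ = v * ρ - μ - w * q := by
    intro q ρ; unfold sigma0; rw [abs_neg, abs_of_pos hw]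
  -- a distinguished feasible density
  set ρ₁ : ℝ := max 0 (μ / v) with hρ₁def
  have hρ₁ : 0 ≤ ρ₁ := le_max_left _ _
  have hμρ₁ : μ ≤ v * ρ₁ := by
    rcases le_total μ 0 with h | h
    · have : 0 ≤ v * ρ₁ := mul_nonneg hv.le hρ₁
      linarith
    · calc μ = v * (μ / v) := by field_simp
        _ ≤ v * ρ₁ := mul_le_mul_of_nonneg_left (le_max_right _ _) hv.le
  have hTne : T.Nonempty := ⟨p2 ν m μ v (-w) β lam 0 ρ₁, ρ₁, hρ₁, hμρ₁, rfl⟩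
  have hTlb : ∀ x ∈ T, (0:ℝ) ≤ x := by
    rintro x ⟨ρ, hρ, hμρ, rfl⟩
    exact p2_nonneg hm hβ hw0 le_rfl hv.le (by nlinarith)
  have hTbdd : BddBelow T := ⟨0, hTlb⟩
  set L : ℝ := sInf T with hLdef
  -- lower bound for all elements of S η
  have hLle : ∀ η : ℝ, ∀ x ∈ S η, L ≤ x := by
    rintro η x ⟨q, ρ, hq, hρ, hσ, rfl⟩
    rw [hsig] at hσ
    have hfeas : w * q ≤ v * ρ - μ := by linarith
    have hμρ : μ ≤ v * ρ := by nlinarith [mul_nonneg hw0 hq]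
    have h1 : p2 ν m μ v (-w) β lam 0 ρ ∈ T := ⟨ρ, hρ, hμρ, rfl⟩
    have h2 : L ≤ p2 ν m μ v (-w) β lam 0 ρ := csInf_le hTbdd h1
    have h3 : p2 ν m μ v (-w) β lam 0 ρ ≤ p2 ν m μ v (-w) β lam q ρ :=
      p2_mono hν hm hβ hw0 hq hfeas hmeas hlam1 hlamInt
    have h4 : 0 ≤ η ^ 2 / (fF ν m μ v 0 ρ - -w * q) := by
      refine div_nonneg (sq_nonneg η) ?_
      rw [fF_zero_eq]
      nlinarith [mul_nonneg hw0 hq]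
    unfold p2eta
    linarith
  have hSmem : ∀ η ρ, 0 ≤ ρ → μ ≤ v * ρ → p2eta ν m μ v (-w) β lam 0 ρ η ∈ S η := by
    intro η ρ hρ hμρ
    refine ⟨0, ρ, le_rfl, hρ, ?_, rfl⟩
    rw [hsig]
    nlinarith
  have hSne : ∀ η : ℝ, (S η).Nonempty := fun η =>
    ⟨p2eta ν m μ v (-w) β lam 0 ρ₁ η, hSmem η ρ₁ hρ₁ hμρ₁⟩
  have hSbdd : ∀ η : ℝ, BddBelow (S η) := fun η => ⟨L, fun x hx => hLle η x hx⟩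
  rw [tendsto_order]
  constructor
  · intro a ha
    refine Filter.Eventually.of_forall fun η => ?_
    exact lt_of_lt_of_le ha (le_csInf (hSne η) (fun x hx => hLle η x hx))
  · intro a ha
    obtain ⟨x, hxT, hxa⟩ := exists_lt_of_csInf_lt hTne ha
    obtain ⟨ρ₀, hρ₀, hμρ₀, hxeq⟩ := hxT
    set d : ℝ := fF ν m μ v 0 ρ₀ - -w * 0 with hddef
    have htend : Tendsto (fun η : ℝ => η ^ 2 / d) (𝓝[>] (0:ℝ)) (𝓝 0) := by
      have h1 : Tendsto (fun η : ℝ => η ^ 2 / d) (𝓝 (0:ℝ)) (𝓝 ((0:ℝ) ^ 2 / d)) :=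
        ((continuous_pow 2).div_const d).tendsto 0
      rw [show (0:ℝ) ^ 2 / d = 0 by simp] at h1
      exact h1.mono_left nhdsWithin_le_nhds
    have hev : ∀ᶠ η in 𝓝[>] (0:ℝ), η ^ 2 / d < a - x :=
      htend.eventually (eventually_lt_nhds (by linarith) )
    filter_upwards [hev] with η hη
    have hmem : p2eta ν m μ v (-w) β lam 0 ρ₀ η ∈ S η := hSmem η ρ₀ hρ₀ hμρ₀
    have hle : sInf (S η) ≤ p2eta ν m μ v (-w) β lam 0 ρ₀ η := csInf_le (hSbdd η) hmem
    have heq : p2eta ν m μ v (-w) β lam 0 ρ₀ η = x + η ^ 2 / d := by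
      unfold p2eta
      rw [← hxeq, hddef]
    calc sInf (S η) ≤ x + η ^ 2 / d := by rw [← heq]; exact hle
      _ < a := by linarith

end PB
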